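/- For every n ≥ 1 and every 1 ≤ j ≤ n−1, c(n,j)² ≥ c(n,j−1)·c(n,j+1); that is, for each fixed n the sequence {c(n,j)}_{j=0}^{n} is log-concave. -/

import Mathlib

namespace StirlingLC

open Equiv Equiv.Perm

/-- Recursive model of signless Stirling numbers of the first kind. -/
def St : ℕ → ℕ → ℕ
  | 0, 0 => 1
  | 0, _ + 1 => 0
  | _ + 1, 0 => 0
  | n + 1, j + 1 => St n j + n * St n (j + 1)

/-- Strong log-concavity statement for `St`. -/
lemma St_H : ∀ n j k : ℕ, St n j * St n (j + k + 1) ≤ St n (j + 1) * St n (j + k) := by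
  intro n
  induction n with
  | zero =>
    intro j k
    have : St 0 (j + k + 1) = 0 := rfl
    simp [this]
  | succ n IH =>
    intro j k
    match j, k with
    | 0, k => simp [St]
    | m + 1, 0 => rw [mul_comm]
    | m + 1, l + 1 =>
      have e1 : m + 1 + (l + 1) + 1 = (m + (l + 2)) + 1 := by ring
      have e2 : m + 1 + (l + 1) = (m + (l + 1)) + 1 := by ring
      rw [e1, e2]
      show (St n m + n * St n (m + 1)) * (St n (m + (l + 2)) + n * St n (m + (l + 2) + 1)) ≤
        (St n (m + 1) + n * St n (m + 1 + 1)) * (St n (m + (l + 1)) + n * St n (m + (l + 1) + 1))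
      have h1 := IH m (l + 1)
      have h2 := IH (m + 1) (l + 1)
      have h3 := IH m (l + 2)
      have h4 := IH (m + 1) l
      have e3 : m + (l + 1) + 1 = m + (l + 2) := by ring
      have e4 : m + 1 + (l + 1) + 1 = m + (l + 2) + 1 := by ring
      have e5 : m + 1 + (l + 1) = m + (l + 2) := by ring
      have e6 : m + (l + 2) + 1 = m + (l + 2) + 1 := rfl
      have e7 : m + 1 + l + 1 = m + (l + 1) + 1 := by ring
      have e8 : m + 1 + l = m + (l + 1) := by ring
      rw [e3] at h1
      rw [e4, e5] at h2
      rw [e7, e8] at h4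
      have e9 : m + (l + 2) + 1 = m + (l + 3) := by ring
      rw [e3] at h4
      rw [e9] at h3 h2 ⊢
      rw [e3]
      -- h3 : St n m * St n (m+(l+3)) ≤ St n (m+1) * St n (m+(l+2))
      have h5 : St n m * St n (m + (l + 3)) ≤ St n (m + 1 + 1) * St n (m + (l + 1)) :=
        le_trans h3 h4
      have expand1 : (St n m + n * St n (m + 1)) * (St n (m + (l + 2)) + n * St n (m + (l + 3)))
          = St n m * St n (m + (l + 2)) + (n * (St n m * St n (m + (l + 3)))
            + (n * (St n (m + 1) * St n (m + (l + 2)))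
              + n * n * (St n (m + 1) * St n (m + (l + 3))))) := by ring
      have expand2 : (St n (m + 1) + n * St n (m + 1 + 1)) * (St n (m + (l + 1)) + n * St n (m + (l + 2)))
          = St n (m + 1) * St n (m + (l + 1)) + (n * (St n (m + 1 + 1) * St n (m + (l + 1)))
            + (n * (St n (m + 1) * St n (m + (l + 2)))
              + n * n * (St n (m + 1 + 1) * St n (m + (l + 2))))) := by ring
      rw [expand1, expand2]
      exact add_le_add h1 (add_le_add (Nat.mul_le_mul_left _ h5)
        (add_le_add (Nat.mul_le_mul_left _ le_rfl) (Nat.mul_le_mul_left _ h2)))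

lemma St_logConcave (n j : ℕ) (hj : 1 ≤ j) :
    St n (j - 1) * St n (j + 1) ≤ St n j ^ 2 := by
  obtain ⟨m, rfl⟩ : ∃ m, j = m + 1 := ⟨j - 1, by omega⟩
  have := St_H n m 1
  simpa [pow_two, show m + 1 - 1 = m from rfl, show m + 1 + 1 = m + 2 from rfl] using this


variable {β : Type*} [Fintype β] [DecidableEq β]

/-- Number of orbits of a permutation (cycles plus fixed points). -/
def orbc (σ : Perm β) : ℕ :=
  Multiset.card σ.cycleType + (Fintype.card β - σ.support.card)

lemma support_swap_mul_eq' {f : Perm β} {x y : β} (hx : f x = x) (hy : f y ≠ y) :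
    (swap x y * f).support = insert x f.support := by
  have hxy : x ≠ y := fun h => hy (h ▸ hx)
  ext z
  simp only [Finset.mem_insert, mem_support, mul_apply]
  rcases eq_or_ne z x with rfl | hzx
  · simp [hx, Ne.symm hxy]
  · have hfzx : f z ≠ x := fun h => hzx (f.injective (h.trans hx.symm))
    rcases eq_or_ne (f z) y with hfy | hfy
    · have hz : f z ≠ z := by
        rw [hfy]; intro h; exact hy (h ▸ hfy)
      have hyz : ¬y = z := fun h => hz (hfy.trans h)
      simp [hfy, Ne.symm hzx, hz, hzx, hyz]
    · rw [swap_apply_of_ne_of_ne hfzx hfy]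
      simp [hzx]

lemma isCycle_swap_mul_of_fixed {c : Perm β} (hc : c.IsCycle) {x y : β}
    (hx : c x = x) (hy : c y ≠ y) : (swap x y * c).IsCycle := by
  have hxy : x ≠ y := fun h => hy (h ▸ hx)
  set c' := swap x y * c with hc'
  have hx' : c' x = y := by simp [hc', hx]
  refine ⟨x, by rw [hx']; exact Ne.symm hxy, ?_⟩
  intro w hw
  rcases eq_or_ne w x with rfl | hwx
  · exact SameCycle.refl _ _
  have hcw : c w ≠ w := by
    intro h
    apply hw
    rcases eq_or_ne w y with rfl | hwy
    · exact absurd h hy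
    · simp [hc', h, swap_apply_of_ne_of_ne hwx hwy]
  have hyc : c.SameCycle y w := hc.sameCycle hy hcw
  obtain ⟨i, hi, hiw⟩ := hyc.exists_pow_eq_of_mem_support (mem_support.2 hy)
  have hcy : c.cycleOf y = c := hc.cycleOf_eq hy
  rw [hcy] at hi
  have claim : ∀ j, j < c.support.card → (c' ^ (j + 1)) x = (c ^ j) y := by
    intro j
    induction j with
    | zero => intro _; simpa using hx'
    | succ j IHj =>
      intro hj
      have hj' : j < c.support.card := Nat.lt_of_succ_lt hj
      have hmem : (c ^ j) y ∈ c.support := pow_apply_mem_support.2 (mem_support.2 hy)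
      have hne_y : c ((c ^ j) y) ≠ y := by
        intro h
        have hone : c ^ (j + 1) = 1 := hc.pow_eq_one_iff.2 ⟨y, hy, by
          rw [pow_succ', mul_apply]; exact h⟩
        have hord : orderOf c = c.support.card := hc.orderOf
        have hdvd : c.support.card ∣ j + 1 := hord ▸ orderOf_dvd_of_pow_eq_one hone
        have := Nat.le_of_dvd (Nat.succ_pos j) hdvd
        omega
      have hne_x2 : c ((c ^ j) y) ≠ x := by
        have hmem2 : c ((c ^ j) y) ∈ c.support := apply_mem_support.2 hmem
        intro h
        exact (mem_support.1 (h ▸ hmem2)) hx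
      have : (c' ^ (j + 1 + 1)) x = c' ((c' ^ (j + 1)) x) := by
        rw [pow_succ', mul_apply]
      rw [this, IHj hj']
      rw [pow_succ', mul_apply]
      simp [hc', swap_apply_of_ne_of_ne hne_x2 hne_y]
  exact ⟨(i + 1 : ℕ), by rw [zpow_natCast]; exact (claim i hi).trans hiw⟩

lemma card_cycleFactorsFinset_swap_mul {f : Perm β} {x y : β} (hx : f x = x) (hy : f y ≠ y) :
    (swap x y * f).cycleFactorsFinset.card = f.cycleFactorsFinset.card := by
  have hxy : x ≠ y := fun h => hy (h ▸ hx)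
  set g := swap x y * f with hg
  have hxf : x ∉ f.support := by simp [mem_support, hx]
  have hgx : g x = y := by simp [hg, hx]
  have hgy : g y ≠ y := by
    simp only [hg, mul_apply]
    intro h
    have h2 : f y = x := by
      have := congrArg (swap x y) h
      rwa [swap_apply_self, swap_apply_right] at this
    exact hxy (f.injective (hx.trans h2.symm))
  symm
  refine Finset.card_bij (fun c _ => if y ∈ c.support then swap x y * c else c) ?_ ?_ ?_
  · -- maps to
    intro c hc
    obtain ⟨hcyc, hsupp⟩ := mem_cycleFactorsFinset_iff.1 hc
    have hcsub : c.support ⊆ f.support := mem_cycleFactorsFinset_support_le hc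
    have hcx : c x = x := by
      by_contra h
      exact hxf (hcsub (mem_support.2 h))
    by_cases hyc : y ∈ c.support
    · rw [if_pos hyc]
      have hcy : c y ≠ y := mem_support.1 hyc
      refine mem_cycleFactorsFinset_iff.2 ⟨isCycle_swap_mul_of_fixed hcyc hcx hcy, ?_⟩
      intro a ha
      rw [support_swap_mul_eq' hcx hcy] at ha
      rcases Finset.mem_insert.1 ha with rfl | ha'
      · simp [hg, mul_apply, hcx, hx]
      · have hca : c a = f a := hsupp a ha'
        rw [mul_apply, mul_apply, hca]
    · rw [if_neg hyc]
      refine mem_cycleFactorsFinset_iff.2 ⟨hcyc, fun a ha => ?_⟩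
      have hca : c a = f a := hsupp a ha
      have h1 : c a ∈ c.support := apply_mem_support.2 ha
      have hne_x : c a ≠ x := fun h => hxf (hcsub (h ▸ h1))
      have hne_y : c a ≠ y := fun h => hyc (h ▸ h1)
      rw [hg, mul_apply, ← hca, swap_apply_of_ne_of_ne hne_x hne_y]
  · -- injective
    intro c1 h1 c2 h2 heq
    have hx1 : c1 x = x := by
      by_contra h
      exact hxf (mem_cycleFactorsFinset_support_le h1 (mem_support.2 h))
    have hx2 : c2 x = x := by
      by_contra h
      exact hxf (mem_cycleFactorsFinset_support_le h2 (mem_support.2 h))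
    by_cases hy1 : y ∈ c1.support <;> by_cases hy2 : y ∈ c2.support
    · rw [if_pos hy1, if_pos hy2] at heq
      exact mul_left_cancel heq
    · rw [if_pos hy1, if_neg hy2] at heq
      exfalso
      have := congrFun (congrArg (fun (p : Perm β) => (p : β → β)) heq) x
      simp only [mul_apply, hx1] at this
      rw [swap_apply_left, hx2] at this
      exact hxy this.symm
    · rw [if_neg hy1, if_pos hy2] at heq
      exfalso
      have := congrFun (congrArg (fun (p : Perm β) => (p : β → β)) heq) x
      simp only [mul_apply, hx2] at this
      rw [hx1, swap_apply_left] at this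
      exact hxy this
    · rw [if_neg hy1, if_neg hy2] at heq
      exact heq
  · -- surjective
    intro d hd
    obtain ⟨hdc, hdsupp⟩ := mem_cycleFactorsFinset_iff.1 hd
    by_cases hxd : x ∈ d.support
    · have hdx : d x = y := (hdsupp x hxd).trans hgx
      have hyd : y ∈ d.support := hdx ▸ apply_mem_support.2 hxd
      have hdy : d y ≠ y := mem_support.1 hyd
      have hdyx : d y ≠ x := by
        intro h
        have hdygy : d y = g y := hdsupp y hyd
        rw [h] at hdygy
        have : f y = y := by
          have h3 : swap x y (f y) = x := by rw [← mul_apply, ← hg, ← hdygy]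
          have := congrArg (swap x y) h3
          rwa [swap_apply_self, swap_apply_left] at this
        exact hy this
      set e := swap x y * d with he
      have hdx' : d x ≠ x := by rw [hdx]; exact Ne.symm hxy
      have hec : e.IsCycle := by
        have h4 := hdc.swap_mul hdx' (by rw [hdx]; exact hdyx)
        rw [hdx] at h4
        exact h4
      have hex : e x = x := by rw [he, mul_apply, hdx, swap_apply_right]
      refine ⟨e, ?_, ?_⟩
      · refine mem_cycleFactorsFinset_iff.2 ⟨hec, fun a ha => ?_⟩
        have hax : a ≠ x := by
          intro h
          rw [h] at ha
          exact (mem_support.1 ha) hex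
        have had : a ∈ d.support := by
          by_contra had
          have hda : d a = a := notMem_support.1 had
          have hea := mem_support.1 ha
          rcases eq_or_ne a y with rfl | hay
          · exact had hyd
          · rw [he, mul_apply, hda, swap_apply_of_ne_of_ne hax hay] at hea
            exact hea rfl
        have hda : d a = g a := hdsupp a had
        rw [he, mul_apply, hda, hg, mul_apply, swap_apply_self]
      · have hye : y ∈ e.support := by
          have hey : e y = d y := by rw [he, mul_apply, swap_apply_of_ne_of_ne hdyx hdy]
          rw [mem_support, hey]
          exact hdy
        rw [if_pos hye, he, ← mul_assoc, swap_mul_self, one_mul]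
    · have hyd : y ∉ d.support := by
        intro hyd
        have hdcy : d = g.cycleOf y := cycle_is_cycleOf hyd hd
        have hsc : g.SameCycle y x := Equiv.Perm.SameCycle.symm ⟨1, by simpa using hgx⟩
        have : x ∈ d.support := by
          rw [hdcy]
          exact mem_support_cycleOf_iff.2 ⟨hsc, mem_support.2 hgy⟩
        exact hxd this
      refine ⟨d, ?_, by rw [if_neg hyd]⟩
      refine mem_cycleFactorsFinset_iff.2 ⟨hdc, fun a ha => ?_⟩
      have hda : d a = g a := hdsupp a ha
      have h1 : d a ∈ d.support := apply_mem_support.2 ha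
      have hne_x : d a ≠ x := fun h => hxd (h ▸ h1)
      have hne_y : d a ≠ y := fun h => hyd (h ▸ h1)
      have hfa : f a = swap x y (g a) := by rw [hg, mul_apply, swap_apply_self]
      rw [hfa, ← hda, swap_apply_of_ne_of_ne hne_x hne_y]

lemma card_cycleType_eq (σ : Perm β) :
    Multiset.card σ.cycleType = σ.cycleFactorsFinset.card := by
  rw [cycleType_def, Multiset.card_map]
  rfl

lemma orbc_swap_mul {f : Perm β} {x y : β} (hx : f x = x) (hxy : x ≠ y) :
    orbc (swap x y * f) + 1 = orbc f := by
  have hxf : x ∉ f.support := by simp [mem_support, hx]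
  by_cases hy : f y = y
  · have hdisj : (swap x y).Disjoint f := by
      intro z
      rcases eq_or_ne z x with rfl | hzx
      · right; exact hx
      rcases eq_or_ne z y with rfl | hzy
      · right; exact hy
      · left; exact swap_apply_of_ne_of_ne hzx hzy
    have hct : (swap x y * f).cycleType = (swap x y).cycleType + f.cycleType :=
      hdisj.cycleType_mul
    have hsw : (swap x y).cycleType = {2} := by
      rw [(isCycle_swap hxy).cycleType, card_support_swap hxy]
    have hyf : y ∉ f.support := by simp [mem_support, hy]
    have hb : f.support.card + 2 ≤ Fintype.card β := by
      have h5 : (insert x (insert y f.support)).card ≤ Fintype.card β := by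
        rw [← Finset.card_univ]
        exact Finset.card_le_univ _
      rw [Finset.card_insert_of_notMem (by simp [hxf, hxy]),
        Finset.card_insert_of_notMem hyf] at h5
      omega
    have c1 : Multiset.card (swap x y * f).cycleType = Multiset.card f.cycleType + 1 := by
      rw [hct, hsw]; simp [add_comm]
    have s1 : (swap x y * f).support.card = f.support.card + 2 := by
      rw [← sum_cycleType, hct, hsw, Multiset.sum_add, ← sum_cycleType f]
      simp [add_comm]
    unfold orbc
    rw [c1, s1]
    omega
  · have c1 : Multiset.card (swap x y * f).cycleType = Multiset.card f.cycleType := by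
      rw [card_cycleType_eq, card_cycleType_eq]
      exact card_cycleFactorsFinset_swap_mul hx hy
    have s1 : (swap x y * f).support.card = f.support.card + 1 := by
      rw [support_swap_mul_eq' hx hy, Finset.card_insert_of_notMem hxf]
    have hb : f.support.card + 1 ≤ Fintype.card β := by
      have h5 : (insert x f.support).card ≤ Fintype.card β := by
        rw [← Finset.card_univ]
        exact Finset.card_le_univ _
      rwa [Finset.card_insert_of_notMem hxf] at h5
    unfold orbc
    rw [c1, s1]
    omega


variable {β : Type*} [Fintype β] [DecidableEq β]

variable {α : Type*} [Fintype α] [DecidableEq α]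

lemma optionCongr_eq_extendDomain (e : Perm α) :
    (e.optionCongr : Perm (Option α)) = e.extendDomain (optionIsSomeEquiv α).symm := by
  apply Equiv.ext
  intro z
  cases z with
  | none =>
    rw [extendDomain_apply_not_subtype]
    · simp
    · simp
  | some a =>
    have h := e.extendDomain_apply_subtype (optionIsSomeEquiv α).symm
      (b := some a) rfl
    rw [h]
    simp [optionIsSomeEquiv]

lemma cycleType_optionCongr (e : Perm α) :
    Equiv.Perm.cycleType (α := Option α) e.optionCongr = e.cycleType := by
  rw [optionCongr_eq_extendDomain]
  exact cycleType_extendDomain _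

lemma orbc_optionCongr (e : Perm α) :
    orbc (β := Option α) e.optionCongr = orbc e + 1 := by
  unfold orbc
  have hs : Equiv.Perm.support (α := Option α) e.optionCongr = Equiv.Perm.support
      (e.extendDomain (optionIsSomeEquiv α).symm) := by
    rw [optionCongr_eq_extendDomain]
  have hs' : (Equiv.Perm.support (α := Option α) e.optionCongr).card = e.support.card := by
    rw [← sum_cycleType, ← sum_cycleType e, cycleType_optionCongr]
  have hc : Multiset.card (Equiv.Perm.cycleType (α := Option α) e.optionCongr)
      = Multiset.card e.cycleType := by
    rw [cycleType_optionCongr]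
  have hb : e.support.card ≤ Fintype.card α := by
    rw [← Finset.card_univ]; exact Finset.card_le_univ _
  rw [hs', hc, Fintype.card_option]
  omega

lemma orbc_option (σ : Perm (Option α)) :
    orbc σ = orbc (removeNone σ) + (if σ none = none then 1 else 0) := by
  rcases h : σ none with _ | a
  · have h1 : (removeNone σ).optionCongr = σ := by
      rw [map_equiv_removeNone, h, swap_self]
      ext z; simp
    rw [if_pos rfl]
    conv_lhs => rw [← h1]
    rw [orbc_optionCongr]
  · have h1 : (removeNone σ).optionCongr = swap none (some a) * σ := by
      rw [map_equiv_removeNone, h]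
    have h2 : σ = swap none (some a) * (removeNone σ).optionCongr := by
      rw [h1, ← mul_assoc, swap_mul_self, one_mul]
    have h3 : (removeNone σ).optionCongr none = none := by simp
    have h4 := orbc_swap_mul (f := (removeNone σ).optionCongr) h3
      (show (none : Option α) ≠ some a by simp)
    rw [← h2, orbc_optionCongr] at h4
    rw [if_neg (by simp)]
    omega

/-- The number of permutations with `j` orbits. -/
noncomputable def scount (β : Type*) [Fintype β] [DecidableEq β] (j : ℕ) : ℕ :=
  Nat.card {σ : Perm β // orbc σ = j}

lemma orbc_permCongr (e : α ≃ β) (σ : Perm α) : orbc (e.permCongr σ) = orbc σ := by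
  have hext : σ.extendDomain (e.trans (Equiv.subtypeUnivEquiv
      (fun b : β => trivial)).symm) = e.permCongr σ := by
    ext b
    rw [extendDomain_apply_subtype _ _ (show (fun _ : β => True) b from trivial)]
    simp [Equiv.subtypeUnivEquiv]
  have hct : (e.permCongr σ).cycleType = σ.cycleType := by
    rw [← hext]; exact cycleType_extendDomain _
  unfold orbc
  have hs : (e.permCongr σ).support.card = σ.support.card := by
    rw [← sum_cycleType, ← sum_cycleType, hct]
  rw [hct, hs, Fintype.card_congr e]

lemma scount_congr (e : α ≃ β) (j : ℕ) : scount α j = scount β j := by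
  unfold scount
  exact Nat.card_congr ((e.permCongr).subtypeEquiv (fun σ => by rw [orbc_permCongr]))

lemma scount_option (j : ℕ) :
    scount (Option α) (j + 1) = scount α j + Fintype.card α * scount α (j + 1) := by
  unfold scount
  have E1 : {σ : Perm (Option α) // orbc σ = j + 1} ≃
      {p : Option α × Perm α // orbc p.2 + (if p.1 = none then 1 else 0) = j + 1} :=
    Equiv.Perm.decomposeOption.subtypeEquiv (fun σ => by
      rw [decomposeOption_apply, orbc_option σ])
  have E2 : {p : Option α × Perm α // orbc p.2 + (if p.1 = none then 1 else 0) = j + 1} ≃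
      {e : Perm α // orbc e = j} ⊕ (α × {e : Perm α // orbc e = j + 1}) := by
    refine ⟨fun s => ?_, fun s => ?_, ?_, ?_⟩
    · rcases s with ⟨⟨x | a, e⟩, h⟩
      · exact Sum.inl ⟨e, by simp at h; omega⟩
      · exact Sum.inr ⟨a, ⟨e, by simpa using h⟩⟩
    · rcases s with ⟨e, h⟩ | ⟨a, e, h⟩
      · exact ⟨(none, e), by simp [h]⟩
      · exact ⟨(some a, e), by simp [h]⟩
    · rintro ⟨⟨x | a, e⟩, h⟩ <;> rfl
    · rintro (⟨e, h⟩ | ⟨a, e, h⟩) <;> rfl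
  rw [Nat.card_congr (E1.trans E2), Nat.card_sum, Nat.card_prod]
  simp [Nat.card_eq_fintype_card]

lemma scount_option_zero : scount (Option α) 0 = 0 := by
  unfold scount
  have : IsEmpty {σ : Perm (Option α) // orbc σ = 0} := by
    refine ⟨fun ⟨σ, hσ⟩ => ?_⟩
    unfold orbc at hσ
    have h1 : Multiset.card σ.cycleType = 0 := by omega
    have h2 : σ = 1 := card_cycleType_eq_zero.1 h1
    rw [h2] at hσ
    simp [Fintype.card_option] at hσ
  exact Nat.card_of_isEmpty


lemma scount_fin_succ (n j : ℕ) : scount (Fin (n + 1)) j = scount (Option (Fin n)) j :=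
  scount_congr (finSuccEquiv n) j

end StirlingLC

/-- The signless Stirling number of the first kind `c(n,j)`: the number of permutations of an
`n`-element set with exactly `j` orbits (disjoint cycles, fixed points counted as cycles). -/
noncomputable def stirC (n j : ℕ) : ℕ :=
  Nat.card {σ : Equiv.Perm (Fin n) // σ.cycleType.card + (n - σ.support.card) = j}

namespace StirlingLC

open Equiv Equiv.Perm

lemma stirC_eq_scount (n j : ℕ) : stirC n j = scount (Fin n) j := by
  unfold stirC scount
  apply Nat.card_congr
  apply Equiv.subtypeEquivRight
  intro σ
  simp [orbc]

lemma stirC_eq_St (n j : ℕ) : stirC n j = St n j := by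
  induction n generalizing j with
  | zero =>
    have huniq : ∀ σ : Perm (Fin 0), σ = 1 := fun σ => Equiv.ext fun x => x.elim0
    cases j with
    | zero =>
      unfold stirC
      rw [Nat.card_congr (Equiv.subtypeUnivEquiv (fun σ => by rw [huniq σ]; simp))]
      rw [Nat.card_eq_fintype_card, Fintype.card_perm, Fintype.card_fin]
      rfl
    | succ j =>
      unfold stirC
      have : IsEmpty {σ : Equiv.Perm (Fin 0) //
          Multiset.card σ.cycleType + (0 - σ.support.card) = j + 1} := by
        refine ⟨fun ⟨σ, hσ⟩ => ?_⟩
        rw [huniq σ] at hσ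
        simp at hσ
      rw [Nat.card_of_isEmpty]
      rfl
  | succ n IH =>
    cases j with
    | zero =>
      rw [stirC_eq_scount, scount_fin_succ, scount_option_zero]
      rfl
    | succ j =>
      rw [stirC_eq_scount, scount_fin_succ, scount_option, Fintype.card_fin,
        ← stirC_eq_scount, ← stirC_eq_scount, IH, IH]
      rfl

end StirlingLC

/-- For every `n ≥ 1` and `1 ≤ j ≤ n−1`,
`c(n,j)² ≥ c(n,j−1)·c(n,j+1)`: the sequence `{c(n,j)}_j` is log-concave. -/
theorem stirling_first_kind_log_concave (n j : ℕ) (hn : 1 ≤ n) (hj1 : 1 ≤ j) (hj2 : j ≤ n - 1) :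
    stirC n (j - 1) * stirC n (j + 1) ≤ stirC n j ^ 2 := by
  rw [StirlingLC.stirC_eq_St, StirlingLC.stirC_eq_St, StirlingLC.stirC_eq_St]
  exact StirlingLC.St_logConcave n j hj1
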